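/- Let A be a KV-algebra over a field F of characteristic zero and W a left KV-module of A (so wa = 0 for all w ∈ W, a ∈ A). Assume there exists H ∈ A with aH = a for every a ∈ A. Then every parallel 2-chain is a coboundary: if g : A × A → W is a bilinear map satisfying a·g(b,c) = g(ab,c) + g(b,ac) for all a,b,c ∈ A, then, setting θ(a) := g(H,a), one has g(a,b) = a·θ(b) − θ(ab) for all a,b ∈ A; that is, g = δ(−θ) is exact in the KV complex C(A,W). -/
import Mathlib


/-- algebraic content of Proposition 9.1: let `W` be a left KV-module
of a KV-algebra `A`, and suppose `H ∈ A` satisfies `aH = a` for every `a`.  Then every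
parallel 2-chain `g` (i.e. `a·g(b,c) = g(ab,c) + g(b,ac)`) is exact:
`g(a,b) = a·θ(b) − θ(ab)` with `θ(a) := g(H,a)`, i.e. `g = δ(−θ)`. -/
theorem parallel_two_chain_is_exact
    {F : Type*} [Field F] [CharZero F]
    {A : Type*} [AddCommGroup A] [Module F A]
    {W : Type*} [AddCommGroup W] [Module F W]
    (mul : A →ₗ[F] A →ₗ[F] A)
    (hA : ∀ a b c : A, mul (mul a b) c - mul a (mul b c)
        = mul (mul b a) c - mul b (mul a c))
    (l : A →ₗ[F] W →ₗ[F] W)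
    (hW1 : ∀ (a b : A) (w : W), l (mul a b) w - l a (l b w)
        = l (mul b a) w - l b (l a w))
    (H : A) (hH : ∀ a : A, mul a H = a)
    (g : A →ₗ[F] A →ₗ[F] W)
    (hg : ∀ a b c : A, l a (g b c) = g (mul a b) c + g b (mul a c)) :
    ∀ a b : A, g a b = l a (g H b) - g H (mul a b) := by
  intro a b
  have h := hg a H b
  rw [hH a] at h
  rw [h]
  abel
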